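/- Let g satisfy (H2) and let (n,s) solve ds/dt = (g(r(n,s))/n)V(t), dn/dt = -e(t) with 0 ≤ e(t), V(t) > 0, n(t) > 0, s(t) > 0. Then t ↦ g(r(n(t),s(t)))/n(t) is nondecreasing in t. More precisely, d/dt [g(r(n(t),s(t)))/n(t)] = (g'(r) r'_s / n)·(ds/dt) + G(r)·(g(r)²/n²)·e(t) ≥ 0, where G(r) = (g(r) - r g'(r))/g(r)² > 0 by concavity of g. -/
import Mathlib


/-- Under (H2), along any solution of the system
`s' = (g(r(n,s))/n) V`, `n' = -e` with `e ≥ 0`, `V > 0`, the function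
`t ↦ g(r(n(t),s(t)))/n(t)` is nondecreasing in `t`. -/
theorem stmt6 (g g' : ℝ → ℝ) (V n s e : ℝ → ℝ) (A q T : ℝ)
    (hA : 0 < A) (hq1 : 1 < q) (hq2 : q < 2) (hT : 0 < T)
    (hgderiv : ∀ r ∈ Set.Ioi (0:ℝ), HasDerivAt g (g' r) r)
    (hg'pos : ∀ r ∈ Set.Ioi (0:ℝ), 0 < g' r)
    (hgconc : ConcaveOn ℝ (Set.Ici 0) g)
    (hg0 : g 0 = 0)
    (hgpos : ∀ r ∈ Set.Ioi (0:ℝ), 0 < g r)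
    (hnpos : ∀ t ∈ Set.Icc (0:ℝ) T, 0 < n t)
    (hspos : ∀ t ∈ Set.Icc (0:ℝ) T, 0 < s t)
    (hVpos : ∀ t ∈ Set.Icc (0:ℝ) T, 0 < V t)
    (he : ∀ t ∈ Set.Icc (0:ℝ) T, 0 ≤ e t)
    (hs : ∀ t ∈ Set.Icc (0:ℝ) T,
      HasDerivAt s (g (A * n t * s t ^ (q / 2)) / n t * V t) t)
    (hn : ∀ t ∈ Set.Icc (0:ℝ) T, HasDerivAt n (-(e t)) t) :
    MonotoneOn (fun t => g (A * n t * s t ^ (q / 2)) / n t) (Set.Icc 0 T) := by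
  have hF : ∀ t ∈ Set.Icc (0:ℝ) T, ∃ d, 0 ≤ d ∧
      HasDerivAt (fun t => g (A * n t * s t ^ (q / 2)) / n t) d t := by
    intro t ht
    have hnt := hnpos t ht
    have hst := hspos t ht
    have hpowpos : 0 < s t ^ (q / 2) := Real.rpow_pos_of_pos hst _
    have hrtpos : 0 < A * n t * s t ^ (q / 2) := by positivity
    set rt := A * n t * s t ^ (q / 2) with hrt
    have hds := hs t ht
    have hdn := hn t ht
    have hpow : HasDerivAt (fun t => s t ^ (q / 2))
        (g rt / n t * V t * (q / 2) * s t ^ (q / 2 - 1)) t :=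
      hds.rpow_const (Or.inl hst.ne')
    have hr' : HasDerivAt (fun t => A * n t * s t ^ (q / 2))
        (A * (-(e t)) * s t ^ (q / 2) +
          A * n t * (g rt / n t * V t * (q / 2) * s t ^ (q / 2 - 1))) t := by
      exact (hdn.const_mul A).mul hpow
    have hgr : HasDerivAt (fun t => g (A * n t * s t ^ (q / 2)))
        (g' rt * (A * (-(e t)) * s t ^ (q / 2) +
          A * n t * (g rt / n t * V t * (q / 2) * s t ^ (q / 2 - 1)))) t :=
      (hgderiv rt hrtpos).comp t hr'
    have hdF := hgr.div hdn hnt.ne'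
    refine ⟨_, ?_, hdF⟩
    -- key concavity fact: g' rt * rt ≤ g rt
    have hkey : g' rt * rt ≤ g rt := by
      have hsl := hgconc.le_slope_of_hasDerivAt Set.self_mem_Ici
        (le_of_lt hrtpos) hrtpos (hgderiv rt hrtpos)
      rw [slope_def_field, hg0, sub_zero, sub_zero] at hsl
      exact (le_div_iff₀ hrtpos).mp hsl
    have hg't := hg'pos rt hrtpos
    have hgt := hgpos rt hrtpos
    have hVt := hVpos t ht
    have het := he t ht
    have hpow1 : 0 < s t ^ (q / 2 - 1) := Real.rpow_pos_of_pos hst _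
    -- numerator rearranged
    have hnum : g' rt * (A * (-(e t)) * s t ^ (q / 2) +
          A * n t * (g rt / n t * V t * (q / 2) * s t ^ (q / 2 - 1))) * n t
          - g rt * (-(e t))
        = g' rt * (A * g rt * V t * (q / 2) * s t ^ (q / 2 - 1)) * n t
          + e t * (g rt - g' rt * rt) := by
      rw [hrt]
      field_simp
      ring
    rw [hnum]
    have h1 : 0 ≤ g' rt * (A * g rt * V t * (q / 2) * s t ^ (q / 2 - 1)) * n t := by
      positivity
    have h2 : 0 ≤ e t * (g rt - g' rt * rt) :=
      mul_nonneg het (sub_nonneg.mpr hkey)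
    positivity
  have hcont : ContinuousOn (fun t => g (A * n t * s t ^ (q / 2)) / n t)
      (Set.Icc 0 T) := fun t ht =>
    ((hF t ht).choose_spec.2).continuousAt.continuousWithinAt
  refine monotoneOn_of_deriv_nonneg (convex_Icc 0 T) hcont ?_ ?_
  · intro t ht
    have ht' : t ∈ Set.Icc (0:ℝ) T := interior_subset ht
    exact ((hF t ht').choose_spec.2).differentiableAt.differentiableWithinAt
  · intro t ht
    have ht' : t ∈ Set.Icc (0:ℝ) T := interior_subset ht
    obtain ⟨d, hd0, hd⟩ := hF t ht'
    rw [hd.deriv]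
    exact hd0
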